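/- arXiv:2506.05894 — 2 statements merged into one kernel-verified Lean document; each statement's English description precedes it below -/
import Mathlib

section
/- Let Γ̃ be a Hilbert–Schmidt Volterra integral operator on L²([0,T], R^k) with kernel κ(t,s) = 1_{t>s} K_t Y(t) Y^{-1}(s) B, where ||K||_{L^∞} ≤ C₀, Y is the fundamental matrix of dY/dt = (A + B K_t)Y, Y(0) = I_d. Then the resolvent (Γ̃ + id)^{-1} exists as a bounded operator on L²([0,T], R^k) and its operator norm is at most exp(2 T² ||B||_{L^∞}² C₀² exp(2T(||A||_{L^∞} + ||B||_{L^∞} C₀)) + 1/2). -/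
open MeasureTheory
open scoped Matrix.Norms.L2Operator ENNReal NNReal

set_option maxHeartbeats 1000000

/-- Apply a matrix to a vector of `EuclideanSpace ℝ (Fin k)`. -/
noncomputable def mvE {m n : ℕ} (M : Matrix (Fin m) (Fin n) ℝ)
    (v : EuclideanSpace ℝ (Fin n)) : EuclideanSpace ℝ (Fin m) :=
  Matrix.toEuclideanLin M v

lemma mvE_le {m n : ℕ} (M : Matrix (Fin m) (Fin n) ℝ) (v : EuclideanSpace ℝ (Fin n)) :
    ‖mvE M v‖ ≤ ‖M‖ * ‖v‖ :=
  ((Matrix.toEuclideanLin.trans LinearMap.toContinuousLinearMap) M).le_opNorm v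

lemma mvE_zero {m n : ℕ} (v : EuclideanSpace ℝ (Fin n)) :
    mvE (0 : Matrix (Fin m) (Fin n) ℝ) v = 0 := by
  unfold mvE
  rw [map_zero]
  rfl

lemma norm_one_matrix_le {n : ℕ} : ‖(1 : Matrix (Fin n) (Fin n) ℝ)‖ ≤ 1 := by
  rw [Matrix.cstar_norm_def, map_one]
  exact ContinuousLinearMap.norm_id_le

lemma inv_of_summable {A : Type*} [NormedRing A] [CompleteSpace A] {x : A}
    (h : Summable fun n => ‖x ^ n‖) :
    ∃ S : A, S * (1 - x) = 1 ∧ (1 - x) * S = 1 ∧ ‖S‖ ≤ ∑' n, ‖x ^ n‖ := by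
  have hs : Summable fun n => x ^ n := h.of_norm
  set S := ∑' n, x ^ n with hS
  have hx : HasSum (fun n => x ^ n) S := hs.hasSum
  have h1 : HasSum (fun n => x ^ (n + 1)) (S - 1) := by
    have := (hasSum_nat_add_iff' (f := fun n => x ^ n) 1).2 hx
    simpa using this
  have hleft' : HasSum (fun n => x ^ n - x ^ (n + 1)) ((1 - x) * S) := by
    have e : (fun n => x ^ n - x ^ (n + 1)) = fun n => (1 - x) * x ^ n := funext fun n => by
      rw [sub_mul, one_mul, pow_succ']
    rw [e]; exact hx.mul_left (1 - x)
  have hright' : HasSum (fun n => x ^ n - x ^ (n + 1)) (S * (1 - x)) := by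
    have e : (fun n => x ^ n - x ^ (n + 1)) = fun n => x ^ n * (1 - x) := funext fun n => by
      rw [mul_sub, mul_one, pow_succ]
    rw [e]; exact hx.mul_right (1 - x)
  have h2 : HasSum (fun n => x ^ n - x ^ (n + 1)) (S - (S - 1)) := hx.sub h1
  have hl : (1 - x) * S = 1 := by
    have := hleft'.unique h2
    rw [this, sub_sub_cancel]
  have hr : S * (1 - x) = 1 := by
    have := hright'.unique h2
    rw [this, sub_sub_cancel]
  exact ⟨S, hr, hl, norm_tsum_le_tsum_norm h⟩

lemma int_norm_le_sqrt_mul {α E : Type*} [MeasurableSpace α] {μ : Measure α} [IsFiniteMeasure μ]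
    [NormedAddCommGroup E] (f : Lp E 2 μ) :
    ∫ x, ‖f x‖ ∂μ ≤ ((μ Set.univ).toReal) ^ ((1:ℝ)/2) * ‖f‖ := by
  have hm := Lp.aestronglyMeasurable f
  rw [integral_norm_eq_lintegral_enorm hm]
  have h1 : (∫⁻ x, ‖f x‖ₑ ∂μ) = eLpNorm f 1 μ := eLpNorm_one_eq_lintegral_enorm.symm
  have h2 : eLpNorm f 1 μ ≤ eLpNorm f 2 μ * μ Set.univ ^ ((1:ℝ)/2) := by
    have := eLpNorm_le_eLpNorm_mul_rpow_measure_univ (p := 1) (q := 2)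
      (by norm_num) hm
    norm_num at this; exact this
  have hne : eLpNorm f 2 μ * μ Set.univ ^ ((1:ℝ)/2) ≠ ⊤ :=
    ENNReal.mul_ne_top (Lp.eLpNorm_ne_top f)
      (ENNReal.rpow_ne_top_of_nonneg (by norm_num) (measure_ne_top μ _))
  calc (∫⁻ x, ‖f x‖ₑ ∂μ).toReal ≤ (eLpNorm f 2 μ * μ Set.univ ^ ((1:ℝ)/2)).toReal := by
        rw [h1]; exact ENNReal.toReal_mono hne h2
    _ = ((μ Set.univ).toReal) ^ ((1:ℝ)/2) * ‖f‖ := by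
        rw [ENNReal.toReal_mul, Lp.norm_def, ← ENNReal.toReal_rpow, mul_comm]
/-- For the Hilbert–Schmidt Volterra integral operator `Γ̃` on `L²([0,T], ℝ^k)`
with kernel `κ(t,s) = 1_{t>s} K_t Y(t) Y(s)⁻¹ B(s)`, where `‖K‖_{L^∞} ≤ C₀` and `Y` is the
fundamental matrix of `dY/dt = (A + B K_t) Y`, `Y(0) = I`, the resolvent `(Γ̃ + id)⁻¹` exists
as a bounded operator and
`‖(Γ̃ + id)⁻¹‖_op ≤ exp(2 T² ‖B‖² C₀² exp(2T(‖A‖ + ‖B‖ C₀)) + 1/2)`. -/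
theorem stmt3 {d k : ℕ} (T CA CB C₀ : ℝ) (hT : 0 < T)
    (A : ℝ → Matrix (Fin d) (Fin d) ℝ) (B : ℝ → Matrix (Fin d) (Fin k) ℝ)
    (K : ℝ → Matrix (Fin k) (Fin d) ℝ) (Y : ℝ → Matrix (Fin d) (Fin d) ℝ)
    (hA : ContinuousOn A (Set.Icc 0 T)) (hB : ContinuousOn B (Set.Icc 0 T))
    (hAbd : ∀ t ∈ Set.Icc (0 : ℝ) T, ‖A t‖ ≤ CA)
    (hBbd : ∀ t ∈ Set.Icc (0 : ℝ) T, ‖B t‖ ≤ CB)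
    (hKmeas : ∀ i j, Measurable fun t => K t i j)
    (hKbd : ∀ t ∈ Set.Icc (0 : ℝ) T, ‖K t‖ ≤ C₀)
    (hY : ∀ t ∈ Set.Icc (0 : ℝ) T, HasDerivAt Y ((A t + B t * K t) * Y t) t)
    (hY0 : Y 0 = 1)
    (Γ : Lp (EuclideanSpace ℝ (Fin k)) 2 (volume.restrict (Set.Icc (0 : ℝ) T)) →L[ℝ]
         Lp (EuclideanSpace ℝ (Fin k)) 2 (volume.restrict (Set.Icc (0 : ℝ) T)))
    (hΓ : ∀ f : Lp (EuclideanSpace ℝ (Fin k)) 2 (volume.restrict (Set.Icc (0 : ℝ) T)),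
      ∀ᵐ t ∂(volume.restrict (Set.Icc (0 : ℝ) T)),
        (Γ f : ℝ → EuclideanSpace ℝ (Fin k)) t =
          ∫ s in Set.Icc (0 : ℝ) T,
            mvE (if s < t then K t * (Y t * (Y s)⁻¹) * B s else 0) (f s)) :
    ∃ S : Lp (EuclideanSpace ℝ (Fin k)) 2 (volume.restrict (Set.Icc (0 : ℝ) T)) →L[ℝ]
          Lp (EuclideanSpace ℝ (Fin k)) 2 (volume.restrict (Set.Icc (0 : ℝ) T)),
      S.comp (Γ + 1) = 1 ∧ (Γ + 1).comp S = 1 ∧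
      ‖S‖ ≤ Real.exp (2 * T ^ 2 * CB ^ 2 * C₀ ^ 2 *
        Real.exp (2 * T * (CA + CB * C₀)) + 1 / 2) := by
  classical
  haveI : IsFiniteMeasure (volume.restrict (Set.Icc (0 : ℝ) T)) := by
    constructor
    rw [Measure.restrict_apply_univ, Real.volume_Icc]
    exact ENNReal.ofReal_lt_top
  have hT0 : (0:ℝ) ≤ T := hT.le
  have h0mem : (0:ℝ) ∈ Set.Icc (0:ℝ) T := ⟨le_rfl, hT0⟩
  have hCA : 0 ≤ CA := le_trans (norm_nonneg _) (hAbd 0 h0mem)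
  have hCB : 0 ≤ CB := le_trans (norm_nonneg _) (hBbd 0 h0mem)
  have hC0 : 0 ≤ C₀ := le_trans (norm_nonneg _) (hKbd 0 h0mem)
  have hgrow : (0:ℝ) ≤ CA + CB * C₀ := add_nonneg hCA (mul_nonneg hCB hC0)
  set Cinf : ℝ := C₀ * CB * Real.exp ((CA + CB * C₀) * T) with hCinf
  have hCinf0 : 0 ≤ Cinf := by positivity
  set M : ℝ := T * Cinf with hMdef
  have hM0 : 0 ≤ M := mul_nonneg hT0 hCinf0
  -- continuity of Y on [0, T]
  have hYcont : ContinuousOn Y (Set.Icc 0 T) := fun u hu =>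
    ((hY u hu).continuousAt).continuousWithinAt
  -- fundamental matrix bound via Gronwall
  have hfund : ∀ s ∈ Set.Icc (0:ℝ) T, ∀ t ∈ Set.Icc (0:ℝ) T, s ≤ t →
      ‖Y t * (Y s)⁻¹‖ ≤ Real.exp ((CA + CB * C₀) * T) := by
    intro s hs t ht hst
    by_cases hdet : IsUnit (Y s).det
    · have hsub : Set.Icc s t ⊆ Set.Icc (0:ℝ) T := Set.Icc_subset_Icc hs.1 ht.2
      have hcont : ContinuousOn (fun u => Y u * (Y s)⁻¹) (Set.Icc s t) :=
        (hYcont.mono hsub).mul continuousOn_const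
      have hderiv : ∀ u ∈ Set.Ico s t,
          HasDerivWithinAt (fun u => Y u * (Y s)⁻¹)
            ((A u + B u * K u) * (Y u * (Y s)⁻¹)) (Set.Ici u) u := by
        intro u hu
        have hu' : u ∈ Set.Icc (0:ℝ) T := hsub ⟨hu.1, hu.2.le⟩
        have := ((hY u hu').mul_const ((Y s)⁻¹)).hasDerivWithinAt (s := Set.Ici u)
        simpa [mul_assoc] using this
      have hinit : ‖Y s * (Y s)⁻¹‖ ≤ 1 := by
        rw [Matrix.mul_nonsing_inv _ hdet]; exact norm_one_matrix_le
      have hbound : ∀ u ∈ Set.Ico s t,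
          ‖(A u + B u * K u) * (Y u * (Y s)⁻¹)‖ ≤
            (CA + CB * C₀) * ‖Y u * (Y s)⁻¹‖ + 0 := by
        intro u hu
        have hu' : u ∈ Set.Icc (0:ℝ) T := hsub ⟨hu.1, hu.2.le⟩
        have h1 : ‖A u + B u * K u‖ ≤ CA + CB * C₀ :=
          (norm_add_le _ _).trans (add_le_add (hAbd u hu')
            ((Matrix.l2_opNorm_mul _ _).trans
              (mul_le_mul (hBbd u hu') (hKbd u hu') (norm_nonneg _) hCB)))
        rw [add_zero]
        exact (Matrix.l2_opNorm_mul _ _).trans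
          (mul_le_mul_of_nonneg_right h1 (norm_nonneg _))
      have hg := norm_le_gronwallBound_of_norm_deriv_right_le
        hcont hderiv hinit hbound t (Set.right_mem_Icc.2 hst)
      rw [gronwallBound_ε0, one_mul] at hg
      refine hg.trans (Real.exp_le_exp.2 ?_)
      have : t - s ≤ T := by
        have := ht.2; have := hs.1; linarith
      exact mul_le_mul_of_nonneg_left this hgrow
    · rw [Matrix.nonsing_inv_apply_not_isUnit _ hdet, mul_zero, norm_zero]
      positivity
  -- kernel bound
  have hker : ∀ t ∈ Set.Icc (0:ℝ) T, ∀ s ∈ Set.Icc (0:ℝ) T, s < t →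
      ‖K t * (Y t * (Y s)⁻¹) * B s‖ ≤ Cinf := by
    intro t ht s hs hst
    have h1 : ‖K t * (Y t * (Y s)⁻¹)‖ ≤ C₀ * Real.exp ((CA + CB * C₀) * T) :=
      (Matrix.l2_opNorm_mul _ _).trans
        (mul_le_mul (hKbd t ht) (hfund s hs t ht hst.le) (norm_nonneg _) hC0)
    calc ‖K t * (Y t * (Y s)⁻¹) * B s‖ ≤ ‖K t * (Y t * (Y s)⁻¹)‖ * ‖B s‖ :=
          Matrix.l2_opNorm_mul _ _
      _ ≤ (C₀ * Real.exp ((CA + CB * C₀) * T)) * CB := by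
          apply mul_le_mul h1 (hBbd s hs) (norm_nonneg _) (by positivity)
      _ = Cinf := by rw [hCinf]; ring
  -- key pointwise estimate for Γ applied to a bounded function
  have key : ∀ g : Lp (EuclideanSpace ℝ (Fin k)) 2 (volume.restrict (Set.Icc (0:ℝ) T)), ∀ φ : ℝ → ℝ,
      IntegrableOn φ (Set.Icc 0 T) volume →
      (∀ s ∈ Set.Icc (0:ℝ) T, 0 ≤ φ s) →
      (∀ᵐ s ∂(volume.restrict (Set.Icc (0:ℝ) T)), ‖(g : ℝ → EuclideanSpace ℝ (Fin k)) s‖ ≤ φ s) →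
      ∀ᵐ t ∂(volume.restrict (Set.Icc (0:ℝ) T)), ‖(Γ g : ℝ → EuclideanSpace ℝ (Fin k)) t‖ ≤
        Cinf * ∫ s in Set.Icc (0:ℝ) t, φ s := by
    intro g φ hφi hφ0 hgφ
    have hgi : Integrable (fun s => ‖(g : ℝ → EuclideanSpace ℝ (Fin k)) s‖) (volume.restrict (Set.Icc (0:ℝ) T)) :=
      ((Lp.memLp g).integrable one_le_two).norm
    filter_upwards [hΓ g, ae_restrict_mem measurableSet_Icc] with t hid ht
    rw [hid]
    have hstep1 : ‖∫ s in Set.Icc (0:ℝ) T,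
        mvE (if s < t then K t * (Y t * (Y s)⁻¹) * B s else 0)
          ((g : ℝ → EuclideanSpace ℝ (Fin k)) s)‖ ≤
        ∫ s, Set.indicator (Set.Iio t)
          (fun s => Cinf * ‖(g : ℝ → EuclideanSpace ℝ (Fin k)) s‖) s ∂(volume.restrict (Set.Icc (0:ℝ) T)) := by
      refine (norm_integral_le_integral_norm _).trans ?_
      refine integral_mono_of_nonneg
        (Filter.Eventually.of_forall fun s => norm_nonneg _)
        ((hgi.const_mul Cinf).indicator measurableSet_Iio) ?_
      filter_upwards [ae_restrict_mem measurableSet_Icc] with s hs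
      by_cases hst : s < t
      · rw [if_pos hst, Set.indicator_of_mem (show s ∈ Set.Iio t from hst)]
        exact (mvE_le _ _).trans
          (mul_le_mul_of_nonneg_right (hker t ht s hs hst) (norm_nonneg _))
      · rw [if_neg hst, Set.indicator_of_notMem (by simpa using hst), mvE_zero, norm_zero]
    refine hstep1.trans ?_
    rw [integral_indicator measurableSet_Iio,
      Measure.restrict_restrict measurableSet_Iio]
    have hsub2 : Set.Iio t ∩ Set.Icc 0 T ⊆ Set.Icc 0 t := fun s hs => ⟨hs.2.1, hs.1.le⟩
    have hmono2 : ∫ s in Set.Iio t ∩ Set.Icc 0 T,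
        Cinf * ‖(g : ℝ → EuclideanSpace ℝ (Fin k)) s‖ ≤
        ∫ s in Set.Iio t ∩ Set.Icc 0 T, Cinf * φ s := by
      refine integral_mono_of_nonneg
        (Filter.Eventually.of_forall fun s => by positivity)
        ((hφi.mono_set Set.inter_subset_right).const_mul Cinf) ?_
      have hle : volume.restrict (Set.Iio t ∩ Set.Icc 0 T) ≤
          volume.restrict (Set.Icc (0:ℝ) T) :=
        Measure.restrict_mono Set.inter_subset_right le_rfl
      exact (hgφ.filter_mono (ae_mono hle)).mono fun s h =>
        mul_le_mul_of_nonneg_left h hCinf0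
    refine hmono2.trans ?_
    have hmono3 : ∫ s in Set.Iio t ∩ Set.Icc 0 T, Cinf * φ s ≤
        ∫ s in Set.Icc (0:ℝ) t, Cinf * φ s := by
      refine setIntegral_mono_set
        ((hφi.mono_set (Set.Icc_subset_Icc_right ht.2)).const_mul Cinf) ?_
        (HasSubset.Subset.eventuallyLE hsub2)
      refine (ae_restrict_iff' measurableSet_Icc).2
        (Filter.Eventually.of_forall fun s hs =>
          mul_nonneg hCinf0 (hφ0 s ⟨hs.1, hs.2.trans ht.2⟩))
    refine hmono3.trans (le_of_eq ?_)
    exact integral_const_mul _ _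
  -- iterated bound
  have hop : ∀ (n : ℕ) (g : Lp (EuclideanSpace ℝ (Fin k)) 2 (volume.restrict (Set.Icc (0:ℝ) T))),
      ‖(Γ ^ (n+1)) g‖ ≤ M ^ (n+1) / n.factorial * ‖g‖ := by
    intro n g
    have hgi : Integrable (fun s => ‖(g : ℝ → EuclideanSpace ℝ (Fin k)) s‖)
        (volume.restrict (Set.Icc (0:ℝ) T)) :=
      ((Lp.memLp g).integrable one_le_two).norm
    set I0 : ℝ := ∫ s in Set.Icc (0:ℝ) T, ‖(g : ℝ → EuclideanSpace ℝ (Fin k)) s‖ with hI0def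
    have hI0nn : 0 ≤ I0 := integral_nonneg fun s => norm_nonneg _
    have claim : ∀ m : ℕ, ∀ᵐ t ∂(volume.restrict (Set.Icc (0:ℝ) T)),
        ‖((Γ ^ (m+1)) g : ℝ → EuclideanSpace ℝ (Fin k)) t‖ ≤
          Cinf ^ (m+1) * I0 / m.factorial * t ^ m := by
      intro m
      induction m with
      | zero =>
        have h := key g (fun s => ‖(g : ℝ → EuclideanSpace ℝ (Fin k)) s‖) hgi
          (fun s _ => norm_nonneg _) (Filter.Eventually.of_forall fun s => le_rfl)
        filter_upwards [h, ae_restrict_mem measurableSet_Icc] with t h1 ht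
        have hpow : ((Γ ^ (0+1)) g : ℝ → EuclideanSpace ℝ (Fin k)) t =
            (Γ g : ℝ → EuclideanSpace ℝ (Fin k)) t := by
          rw [zero_add, pow_one]
        rw [hpow]
        refine h1.trans ?_
        have hmono : ∫ s in Set.Icc (0:ℝ) t, ‖(g : ℝ → EuclideanSpace ℝ (Fin k)) s‖ ≤ I0 := by
          refine setIntegral_mono_set hgi ?_
            (HasSubset.Subset.eventuallyLE (Set.Icc_subset_Icc_right ht.2))
          exact Filter.Eventually.of_forall fun s => norm_nonneg _
        have : Cinf * ∫ s in Set.Icc (0:ℝ) t, ‖(g : ℝ → EuclideanSpace ℝ (Fin k)) s‖ ≤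
            Cinf * I0 := mul_le_mul_of_nonneg_left hmono hCinf0
        refine this.trans (le_of_eq ?_)
        simp
      | succ m ih =>
        have hφ0 : ∀ s ∈ Set.Icc (0:ℝ) T, 0 ≤ Cinf ^ (m+1) * I0 / m.factorial * s ^ m :=
          fun s hs => mul_nonneg (by positivity) (pow_nonneg hs.1 m)
        have hφi : IntegrableOn (fun s => Cinf ^ (m+1) * I0 / m.factorial * s ^ m)
            (Set.Icc 0 T) volume :=
          (Continuous.integrableOn_Icc (continuous_const.mul (continuous_pow m)))
        have h := key ((Γ ^ (m+1)) g) _ hφi hφ0 ih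
        filter_upwards [h, ae_restrict_mem measurableSet_Icc] with t h1 ht
        have hpow : ((Γ ^ (m+1+1)) g : ℝ → EuclideanSpace ℝ (Fin k)) t =
            ((Γ ((Γ ^ (m+1)) g)) : ℝ → EuclideanSpace ℝ (Fin k)) t := by
          congr 2
          rw [pow_succ']
          rfl
        rw [hpow]
        refine h1.trans ?_
        have hint : ∫ s in Set.Icc (0:ℝ) t, Cinf ^ (m+1) * I0 / m.factorial * s ^ m =
            Cinf ^ (m+1) * I0 / m.factorial * (t ^ (m+1) / (m+1)) := by
          rw [MeasureTheory.integral_Icc_eq_integral_Ioc,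
            ← intervalIntegral.integral_of_le ht.1,
            intervalIntegral.integral_const_mul, integral_pow]
          norm_num
        rw [hint]
        have hfac : ((m+1).factorial : ℝ) = ((m:ℝ)+1) * m.factorial := by
          exact_mod_cast Nat.factorial_succ m
        have hfacpos : (0:ℝ) < m.factorial := by exact_mod_cast m.factorial_pos
        rw [hfac]
        have hm1 : (0:ℝ) < (m:ℝ) + 1 := by positivity
        field_simp
        ring_nf
        exact le_of_eq (by ring)
    -- Lp norm bound
    have hconst : ∀ᵐ t ∂(volume.restrict (Set.Icc (0:ℝ) T)),
        ‖((Γ ^ (n+1)) g : ℝ → EuclideanSpace ℝ (Fin k)) t‖ ≤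
          Cinf ^ (n+1) * I0 / n.factorial * T ^ n := by
      filter_upwards [claim n, ae_restrict_mem measurableSet_Icc] with t h1 ht
      refine h1.trans (mul_le_mul_of_nonneg_left (pow_le_pow_left₀ ht.1 ht.2 n)
        (by positivity))
    have hbd := Lp.norm_le_of_ae_bound (f := (Γ ^ (n+1)) g)
      (C := Cinf ^ (n+1) * I0 / n.factorial * T ^ n) (by positivity) hconst
    have huniv : ((volume.restrict (Set.Icc (0:ℝ) T)) Set.univ).toReal = T := by
      rw [Measure.restrict_apply_univ, Real.volume_Icc, sub_zero, ENNReal.toReal_ofReal hT0]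
    have hmU : ((measureUnivNNReal (volume.restrict (Set.Icc (0:ℝ) T)) : ℝ)) = T :=
      huniv
    have hI0le : I0 ≤ T ^ ((1:ℝ)/2) * ‖g‖ := by
      have h := int_norm_le_sqrt_mul g
      rw [huniv] at h
      exact h
    have hexp : ((2:ℝ≥0∞).toReal)⁻¹ = ((1:ℝ)/2) := by norm_num
    rw [hmU, hexp] at hbd
    refine hbd.trans ?_
    have haa : T ^ ((1:ℝ)/2) * T ^ ((1:ℝ)/2) = T := by
      rw [← Real.rpow_add hT]; norm_num
    have h1 : T ^ ((1:ℝ)/2) * (Cinf ^ (n+1) * I0 / n.factorial * T ^ n) ≤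
        T ^ ((1:ℝ)/2) * (Cinf ^ (n+1) * (T ^ ((1:ℝ)/2) * ‖g‖) / n.factorial * T ^ n) := by
      gcongr
    refine h1.trans (le_of_eq ?_)
    have h2 : T ^ ((1:ℝ)/2) * (Cinf ^ (n+1) * (T ^ ((1:ℝ)/2) * ‖g‖) / n.factorial * T ^ n) =
        (T ^ ((1:ℝ)/2) * T ^ ((1:ℝ)/2)) * (T ^ n * Cinf ^ (n+1)) * ‖g‖ / n.factorial := by
      ring
    rw [h2, haa, hMdef, mul_pow, pow_succ']
    ring
  -- operator norm of the powers
  have hopn : ∀ n : ℕ, ‖Γ ^ (n+1)‖ ≤ M ^ (n+1) / n.factorial := fun n =>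
    ContinuousLinearMap.opNorm_le_bound _ (by positivity) (hop n)
  have hxn : ∀ n : ℕ, ‖(-Γ) ^ n‖ = ‖Γ ^ n‖ := by
    intro n
    rcases Nat.even_or_odd n with h | h
    · rw [h.neg_pow]
    · rw [h.neg_pow, norm_neg]
  have hsumRHS : Summable (fun n : ℕ => M ^ (n+1) / n.factorial) := by
    have := (Real.summable_pow_div_factorial M).mul_left M
    refine this.congr fun n => ?_
    rw [pow_succ']; ring
  have hsum1 : Summable (fun n : ℕ => ‖(-Γ) ^ (n+1)‖) :=
    Summable.of_nonneg_of_le (fun n => norm_nonneg _)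
      (fun n => by rw [hxn]; exact hopn n) hsumRHS
  have hsum : Summable (fun n : ℕ => ‖(-Γ) ^ n‖) := (summable_nat_add_iff 1).1 hsum1
  obtain ⟨S, hSr, hSl, hSn⟩ := inv_of_summable hsum
  have h1 : (1 : Lp (EuclideanSpace ℝ (Fin k)) 2 (volume.restrict (Set.Icc (0:ℝ) T)) →L[ℝ]
      Lp (EuclideanSpace ℝ (Fin k)) 2 (volume.restrict (Set.Icc (0:ℝ) T))) - (-Γ) = Γ + 1 := by
    rw [sub_neg_eq_add, add_comm]
  rw [h1] at hSr hSl
  refine ⟨S, ?_, ?_, ?_⟩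
  · rw [← ContinuousLinearMap.mul_def]; exact hSr
  · rw [← ContinuousLinearMap.mul_def]; exact hSl
  · refine hSn.trans ?_
    have htsum : (∑' n : ℕ, ‖(-Γ) ^ n‖) ≤ 1 + M * Real.exp M := by
      rw [hsum.tsum_eq_zero_add]
      have h0 : ‖(-Γ) ^ 0‖ ≤ 1 := by
        rw [pow_zero]
        exact ContinuousLinearMap.norm_id_le
      have h2 : (∑' n : ℕ, ‖(-Γ) ^ (n+1)‖) ≤ ∑' n : ℕ, M ^ (n+1) / n.factorial :=
        hsum1.tsum_le_tsum (fun n => by rw [hxn]; exact hopn n) hsumRHS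
      have h3 : (∑' n : ℕ, M ^ (n+1) / n.factorial) = M * Real.exp M := by
        rw [Real.exp_eq_exp_ℝ, NormedSpace.exp_eq_tsum_div, ← tsum_mul_left]
        exact tsum_congr fun n => by rw [pow_succ']; ring
      linarith
    refine htsum.trans ?_
    have hkey : 1 + M * Real.exp M ≤ Real.exp (2 * M ^ 2 + 1/2) := by
      have e1 : M + 1 ≤ Real.exp M := Real.add_one_le_exp M
      have e2 : (0:ℝ) < Real.exp M := Real.exp_pos M
      have f1 : (1:ℝ) ≤ Real.exp M := by linarith
      have f2 : 1 + M * Real.exp M ≤ (1 + M) * Real.exp M := by nlinarith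
      have f3 : (1 + M) * Real.exp M ≤ Real.exp M * Real.exp M :=
        mul_le_mul_of_nonneg_right (by linarith) e2.le
      have e3 : Real.exp M * Real.exp M = Real.exp (2 * M) := by
        rw [← Real.exp_add]; ring_nf
      have e4 : Real.exp (2 * M) ≤ Real.exp (2 * M ^ 2 + 1/2) :=
        Real.exp_le_exp.2 (by nlinarith [sq_nonneg (2 * M - 1)])
      calc 1 + M * Real.exp M ≤ (1 + M) * Real.exp M := f2
        _ ≤ Real.exp M * Real.exp M := f3
        _ = Real.exp (2 * M) := e3
        _ ≤ Real.exp (2 * M ^ 2 + 1/2) := e4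
    refine hkey.trans (le_of_eq ?_)
    congr 1
    have hexp2 : Real.exp ((CA + CB * C₀) * T) * Real.exp ((CA + CB * C₀) * T) =
        Real.exp (2 * T * (CA + CB * C₀)) := by
      rw [← Real.exp_add]; ring_nf
    rw [hMdef, hCinf]
    have h4 : (T * (C₀ * CB * Real.exp ((CA + CB * C₀) * T))) ^ 2 =
        T ^ 2 * CB ^ 2 * C₀ ^ 2 *
          (Real.exp ((CA + CB * C₀) * T) * Real.exp ((CA + CB * C₀) * T)) := by ring
    rw [h4, hexp2]
    ring
end

section
/- Let ϑ : [0,T] → S^d solve the Lyapunov ODE dϑ/dt = M(t) ϑ(t) + ϑ(t) M(t)^⊤ + D(t)D(t)^⊤ with ϑ(0) = ϑ₀ ⪰ 0 and continuous M, D. Then for all t ∈ [0,T], λ_min(ϑ(t)) ≥ λ_min(ϑ₀) exp(−2T ||M||_{L^∞}). -/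
open MeasureTheory Matrix
open scoped RealInnerProductSpace Matrix.Norms.L2Operator

variable {d : ℕ}

lemma inner_mvE (A : Matrix (Fin d) (Fin d) ℝ) (v : EuclideanSpace ℝ (Fin d)) :
    ⟪v, mvE A v⟫ = v ⬝ᵥ (A *ᵥ v) := by
  simp [mvE, Matrix.toEuclideanLin_apply, PiLp.inner_apply, dotProduct, Matrix.mulVec,
    RCLike.inner_apply, mul_comm]

lemma dot_norm_sq (v : EuclideanSpace ℝ (Fin d)) : v ⬝ᵥ v = ‖v‖ ^ 2 := by
  rw [← real_inner_self_eq_norm_sq]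
  simp [PiLp.inner_apply, dotProduct, RCLike.inner_apply, mul_comm]
  rw [EuclideanSpace.real_norm_sq_eq]; simp [sq]

lemma dot_mulVec_le (A : Matrix (Fin d) (Fin d) ℝ) (u v : EuclideanSpace ℝ (Fin d)) :
    |u ⬝ᵥ (A *ᵥ v)| ≤ ‖A‖ * ‖u‖ * ‖v‖ := by
  have h1 : u ⬝ᵥ (A *ᵥ v) = ⟪u, (EuclideanSpace.equiv (Fin d) ℝ).symm (A *ᵥ v)⟫ := by
    simp [PiLp.inner_apply, dotProduct, RCLike.inner_apply, mul_comm]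
  rw [h1]
  calc |⟪u, (EuclideanSpace.equiv (Fin d) ℝ).symm (A *ᵥ v)⟫| ≤ ‖u‖ * ‖(EuclideanSpace.equiv (Fin d) ℝ).symm (A *ᵥ v)‖ := abs_real_inner_le_norm _ _
    _ ≤ ‖u‖ * (‖A‖ * ‖v‖) := by
        have := Matrix.l2_opNorm_mulVec A v
        nlinarith [norm_nonneg u]
    _ = ‖A‖ * ‖u‖ * ‖v‖ := by ring

/-- quadratic form of a matrix on Euclidean space -/
noncomputable def qd {d : ℕ} (A : Matrix (Fin d) (Fin d) ℝ) (v : EuclideanSpace ℝ (Fin d)) : ℝ :=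
  v ⬝ᵥ (A *ᵥ v)

lemma qd_eq (A : Matrix (Fin d) (Fin d) ℝ) (v : EuclideanSpace ℝ (Fin d)) :
    qd A v = ⟪v, mvE A v⟫ := (inner_mvE A v).symm

section min
variable [Nonempty (Fin d)]

lemma q_cont (A : Matrix (Fin d) (Fin d) ℝ) : Continuous (qd A) := by
  have h : Continuous (mvE A) := (Matrix.toEuclideanLin A).continuous_of_finiteDimensional
  have : Continuous fun v : EuclideanSpace ℝ (Fin d) => ⟪v, mvE A v⟫ :=
    continuous_id.inner h
  simpa only [← qd_eq] using this

omit [Nonempty (Fin d)] in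
lemma q_cont' (A : Matrix (Fin d) (Fin d) ℝ) : Continuous (qd A) := by
  have h : Continuous (mvE A) := (Matrix.toEuclideanLin A).continuous_of_finiteDimensional
  have : Continuous fun v : EuclideanSpace ℝ (Fin d) => ⟪v, mvE A v⟫ :=
    continuous_id.inner h
  simpa only [← qd_eq] using this

lemma min_ex (A : Matrix (Fin d) (Fin d) ℝ) :
    ∃ v ∈ Metric.sphere (0 : EuclideanSpace ℝ (Fin d)) 1,
      IsMinOn (qd A) (Metric.sphere (0 : EuclideanSpace ℝ (Fin d)) 1) v :=
  (isCompact_sphere (0 : EuclideanSpace ℝ (Fin d)) 1).exists_isMinOn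
    (NormedSpace.sphere_nonempty.mpr zero_le_one) (q_cont' A).continuousOn

noncomputable def vMin (A : Matrix (Fin d) (Fin d) ℝ) : EuclideanSpace ℝ (Fin d) :=
  (min_ex A).choose

lemma vMin_norm (A : Matrix (Fin d) (Fin d) ℝ) : ‖vMin A‖ = 1 := by
  have := (min_ex A).choose_spec.1
  simpa [vMin, mem_sphere_iff_norm] using this

noncomputable def lamMin (A : Matrix (Fin d) (Fin d) ℝ) : ℝ := qd A (vMin A)

lemma lamMin_le (A : Matrix (Fin d) (Fin d) ℝ) {u : EuclideanSpace ℝ (Fin d)} (hu : ‖u‖ = 1) :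
    lamMin A ≤ qd A u := by
  have := (min_ex A).choose_spec.2
  exact this (by simpa [mem_sphere_iff_norm] using hu)

end min

lemma inner_mvE2 (A : Matrix (Fin d) (Fin d) ℝ) (u v : EuclideanSpace ℝ (Fin d)) :
    ⟪u, mvE A v⟫ = u ⬝ᵥ (A *ᵥ v) := by
  simp [mvE, Matrix.toEuclideanLin_apply, PiLp.inner_apply, dotProduct, Matrix.mulVec,
    RCLike.inner_apply, mul_comm]

lemma dot_sym {A : Matrix (Fin d) (Fin d) ℝ} (hA : A.IsSymm)
    (u v : EuclideanSpace ℝ (Fin d)) : u ⬝ᵥ (A *ᵥ v) = v ⬝ᵥ (A *ᵥ u) := by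
  rw [Matrix.dotProduct_mulVec, ← Matrix.mulVec_transpose, hA.eq, dotProduct_comm]

lemma inner_mvE_sym {A : Matrix (Fin d) (Fin d) ℝ} (hA : A.IsSymm)
    (u v : EuclideanSpace ℝ (Fin d)) : ⟪u, mvE A v⟫ = ⟪v, mvE A u⟫ := by
  rw [inner_mvE2, inner_mvE2, dot_sym hA]

lemma qd_add (A B : Matrix (Fin d) (Fin d) ℝ) (v : EuclideanSpace ℝ (Fin d)) :
    qd (A + B) v = qd A v + qd B v := by
  simp only [qd_eq, mvE, map_add, LinearMap.add_apply, inner_add_right]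

lemma qd_sub (A B : Matrix (Fin d) (Fin d) ℝ) (v : EuclideanSpace ℝ (Fin d)) :
    qd (A - B) v = qd A v - qd B v := by
  simp only [qd_eq, mvE, map_sub, LinearMap.sub_apply, inner_sub_right]

lemma qd_abs_le (A : Matrix (Fin d) (Fin d) ℝ) (v : EuclideanSpace ℝ (Fin d)) :
    |qd A v| ≤ ‖A‖ * ‖v‖ ^ 2 := by
  have := dot_mulVec_le A v v
  simpa [qd, sq] using by linarith [this, abs_nonneg (v ⬝ᵥ (A *ᵥ v))] ;

lemma qd_vsmul (A : Matrix (Fin d) (Fin d) ℝ) (c : ℝ) (v : EuclideanSpace ℝ (Fin d)) :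
    qd A (c • v) = c ^ 2 * qd A v := by
  have hsm : mvE A (c • v) = c • mvE A v := (Matrix.toEuclideanLin A).map_smul c v
  rw [qd_eq, qd_eq, hsm, real_inner_smul_left, real_inner_smul_right]; ring

section min2
variable [Nonempty (Fin d)]

lemma lamMin_le_qd (A : Matrix (Fin d) (Fin d) ℝ) (v : EuclideanSpace ℝ (Fin d)) :
    lamMin A * ‖v‖ ^ 2 ≤ qd A v := by
  rcases eq_or_ne v 0 with rfl | hv
  · simp [qd_eq]
  · have hn : ‖v‖ ≠ 0 := norm_ne_zero_iff.mpr hv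
    have hu : ‖(‖v‖⁻¹ • v : EuclideanSpace ℝ (Fin d))‖ = 1 := norm_smul_inv_norm hv
    have h := lamMin_le A hu
    rw [qd_vsmul] at h
    have h2 : lamMin A * ‖v‖ ^ 2 ≤ (‖v‖⁻¹ ^ 2 * qd A v) * ‖v‖ ^ 2 := by
      nlinarith [sq_nonneg ‖v‖]
    calc lamMin A * ‖v‖ ^ 2 ≤ (‖v‖⁻¹ ^ 2 * qd A v) * ‖v‖ ^ 2 := h2
      _ = qd A v := by field_simp

lemma lamMin_lipschitz (A B : Matrix (Fin d) (Fin d) ℝ) :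
    |lamMin A - lamMin B| ≤ ‖A - B‖ := by
  have key : ∀ X Y : Matrix (Fin d) (Fin d) ℝ, lamMin X - lamMin Y ≤ ‖X - Y‖ := by
    intro X Y
    have h1 : lamMin X ≤ qd X (vMin Y) := lamMin_le X (vMin_norm Y)
    have h2 : qd X (vMin Y) = qd Y (vMin Y) + qd (X - Y) (vMin Y) := by
      rw [qd_sub]; ring
    have h3 : qd (X - Y) (vMin Y) ≤ ‖X - Y‖ := by
      have h4 := qd_abs_le (X - Y) (vMin Y)
      rw [vMin_norm Y] at h4
      have h5 := abs_le.mp (by simpa using h4)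
      linarith [h5.2]
    have e : qd Y (vMin Y) = lamMin Y := rfl
    rw [h2, e] at h1
    linarith
  rw [abs_sub_le_iff]
  refine ⟨key A B, ?_⟩
  have := key B A
  rwa [norm_sub_rev] at this

lemma eigen {A : Matrix (Fin d) (Fin d) ℝ} (hA : A.IsSymm) {v : EuclideanSpace ℝ (Fin d)}
    (hv : ‖v‖ = 1) (hm : ∀ u : EuclideanSpace ℝ (Fin d), ‖u‖ = 1 → qd A v ≤ qd A u)
    (u : EuclideanSpace ℝ (Fin d)) : u ⬝ᵥ (A *ᵥ v) = lamMin A * (u ⬝ᵥ v) := by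
  have hlam : qd A v = lamMin A := le_antisymm (hm _ (vMin_norm A)) (lamMin_le A hv)
  set l := lamMin A with hl
  have hP0 : ∀ w : EuclideanSpace ℝ (Fin d), 0 ≤ qd A w - l * ‖w‖ ^ 2 := fun w => by
    have := lamMin_le_qd A w; linarith
  have hB : ∀ c : ℝ, 0 ≤ c ^ 2 * (qd A u - l * ‖u‖ ^ 2)
      + 2 * c * (⟪u, mvE A v⟫ - l * ⟪u, v⟫) := by
    intro c
    have h := hP0 (c • u + v)
    have hnorm : ‖(c • u + v : EuclideanSpace ℝ (Fin d))‖ ^ 2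
        = c ^ 2 * ‖u‖ ^ 2 + 2 * c * ⟪u, v⟫ + ‖v‖ ^ 2 := by
      rw [← real_inner_self_eq_norm_sq]
      simp only [inner_add_left, inner_add_right, real_inner_smul_left, real_inner_smul_right,
        real_inner_comm v u, real_inner_self_eq_norm_sq, norm_smul, Real.norm_eq_abs, mul_pow,
        sq_abs]
      ring
    have e1 : mvE A (c • u + v) = c • mvE A u + mvE A v := by
      unfold mvE
      rw [(Matrix.toEuclideanLin A).map_add, (Matrix.toEuclideanLin A).map_smul]
    have hq : qd A (c • u + v) = c ^ 2 * qd A u + 2 * c * ⟪u, mvE A v⟫ + qd A v := by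
      rw [qd_eq, e1]
      simp only [inner_add_left, inner_add_right, real_inner_smul_left, real_inner_smul_right]
      rw [inner_mvE_sym hA v u, ← qd_eq, ← qd_eq]
      ring
    rw [hq, hnorm] at h
    have hv0 : qd A v - l * ‖v‖ ^ 2 = 0 := by rw [hlam, hv]; ring
    nlinarith [h]
  have hzero : ⟪u, mvE A v⟫ - l * ⟪u, v⟫ = 0 := by
    set B := ⟪u, mvE A v⟫ - l * ⟪u, v⟫ with hBdef
    set q := qd A u - l * ‖u‖ ^ 2 with hqdef
    have hq0 : 0 ≤ q := hP0 u
    by_contra hBne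
    have h := hB (-(B / (q + 1)))
    have hq1 : (0:ℝ) < q + 1 := by linarith
    have heq : (-(B / (q + 1))) ^ 2 * q + 2 * (-(B / (q + 1))) * B
        = B ^ 2 * q / (q + 1) ^ 2 - 2 * B ^ 2 / (q + 1) := by
      field_simp; ring
    rw [heq] at h
    have hB2 : 0 < B ^ 2 := by positivity
    have hfinal : B ^ 2 * q / (q + 1) ^ 2 - 2 * B ^ 2 / (q + 1) < 0 := by
      rw [div_sub_div _ _ (by positivity : ((q+1):ℝ)^2 ≠ 0) (by positivity : ((q+1):ℝ) ≠ 0)]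
      apply div_neg_of_neg_of_pos
      · nlinarith
      · positivity
    linarith
  have huv : ⟪u, v⟫ = u ⬝ᵥ v := by
    simp [PiLp.inner_apply, dotProduct, RCLike.inner_apply, mul_comm]
  rw [← inner_mvE2, show ⟪u, mvE A v⟫ = l * ⟪u, v⟫ from by linarith [hzero], huv]

end min2

section min3
variable [Nonempty (Fin d)]

lemma qd_lyap_ge {A M D : Matrix (Fin d) (Fin d) ℝ} {CM : ℝ} (hA : A.IsSymm)
    {v : EuclideanSpace ℝ (Fin d)} (hv : ‖v‖ = 1)
    (hm : ∀ u : EuclideanSpace ℝ (Fin d), ‖u‖ = 1 → qd A v ≤ qd A u)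
    (hM : ‖M‖ ≤ CM) :
    -(2 * CM * |lamMin A|) ≤ qd (M * A + A * Mᵀ + D * Dᵀ) v := by
  rw [qd_add, qd_add]
  have t1 : qd (M * A) v = (Mᵀ *ᵥ v) ⬝ᵥ (A *ᵥ v) := by
    rw [qd, ← Matrix.mulVec_mulVec, Matrix.dotProduct_mulVec, ← Matrix.mulVec_transpose]
  have t2 : qd (A * Mᵀ) v = (Mᵀ *ᵥ v) ⬝ᵥ (A *ᵥ v) := by
    rw [qd, ← Matrix.mulVec_mulVec]; exact dot_sym hA v (WithLp.toLp 2 (Mᵀ *ᵥ v))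
  have t3 : 0 ≤ qd (D * Dᵀ) v := by
    rw [qd, ← Matrix.mulVec_mulVec, Matrix.dotProduct_mulVec, ← Matrix.mulVec_transpose]
    exact Finset.sum_nonneg fun i _ => mul_self_nonneg _
  have eig : (Mᵀ *ᵥ v) ⬝ᵥ (A *ᵥ v) = lamMin A * ((Mᵀ *ᵥ v) ⬝ᵥ v) := eigen hA hv hm (WithLp.toLp 2 (Mᵀ *ᵥ v))
  have cross : (Mᵀ *ᵥ v) ⬝ᵥ v = v ⬝ᵥ (M *ᵥ v) := by
    rw [Matrix.dotProduct_mulVec, ← Matrix.mulVec_transpose]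
  have hCM0 : 0 ≤ CM := le_trans (norm_nonneg M) hM
  have bound : |v ⬝ᵥ (M *ᵥ v)| ≤ CM := by
    have := dot_mulVec_le M v v
    rw [hv] at this
    calc |v ⬝ᵥ (M *ᵥ v)| ≤ ‖M‖ * 1 * 1 := this
      _ ≤ CM := by linarith
  set l := lamMin A
  set s := v ⬝ᵥ (M *ᵥ v)
  have habs : |l * s| ≤ |l| * CM := by
    rw [abs_mul]
    exact mul_le_mul_of_nonneg_left bound (abs_nonneg l)
  have : -(|l| * CM) ≤ l * s := by linarith [neg_abs_le (l * s)]
  rw [t1, t2, eig, cross]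
  linarith

end min3

lemma qd_msmul (c : ℝ) (A : Matrix (Fin d) (Fin d) ℝ) (v : EuclideanSpace ℝ (Fin d)) :
    qd (c • A) v = c * qd A v := by
  have h : mvE (c • A) v = c • mvE A v := by
    unfold mvE
    rw [Matrix.toEuclideanLin.map_smul c A, LinearMap.smul_apply]
  rw [qd_eq, qd_eq, h, real_inner_smul_right]

open Filter Topology Set Real in
lemma key_bound {d : ℕ} [Nonempty (Fin d)] (T CM : ℝ) (hT : 0 < T) (hCM : 0 ≤ CM)
    (M D ϑ : ℝ → Matrix (Fin d) (Fin d) ℝ)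
    (hMbd : ∀ t ∈ Set.Icc (0 : ℝ) T, ‖M t‖ ≤ CM)
    (hϑsymm : ∀ t ∈ Set.Icc (0 : ℝ) T, (ϑ t).IsSymm)
    (hode : ∀ t ∈ Set.Icc (0 : ℝ) T,
      HasDerivAt ϑ (M t * ϑ t + ϑ t * (M t)ᵀ + D t * (D t)ᵀ) t)
    (lam' : ℝ) (hlam'0 : 0 ≤ lam') (hq0 : lam' ≤ lamMin (ϑ 0))
    (ε : ℝ) (hε : 0 < ε) :
    ∀ x ∈ Set.Icc (0 : ℝ) T,
      -(lamMin (ϑ x)) ≤ -(lam' * Real.exp (-(2*CM)*x)) + ε * Real.exp ((2*CM+1)*x) := by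
  set K := 2 * CM with hK
  set L := K + 1 with hL
  set lam : ℝ → ℝ := fun t => lamMin (ϑ t) with hlamdef
  set f : ℝ → ℝ := fun x => -(lam x) with hfdef
  set f' : ℝ → ℝ := fun x => K * |lam x| with hf'def
  set B : ℝ → ℝ := fun x => -(lam' * Real.exp (-K*x)) + ε * Real.exp (L*x) with hBdef
  set B' : ℝ → ℝ := fun x => K * (lam' * Real.exp (-K*x)) + ε * (L * Real.exp (L*x)) with hB'def
  have hϑcont : ContinuousOn ϑ (Icc 0 T) := fun t ht =>
    (hode t ht).continuousAt.continuousWithinAt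
  have hlip : LipschitzWith 1 (lamMin (d := d)) := LipschitzWith.of_dist_le_mul fun A B => by
    simpa [dist_eq_norm, Real.dist_eq] using lamMin_lipschitz A B
  have hlamcont : ContinuousOn lam (Icc 0 T) := hlip.continuous.comp_continuousOn hϑcont
  have hfc : ContinuousOn f (Icc 0 T) := hlamcont.neg
  have ha : f 0 ≤ B 0 := by
    simp only [hfdef, hBdef, mul_zero, Real.exp_zero, mul_one]
    have : lam 0 = lamMin (ϑ 0) := rfl
    linarith
  have hB : ∀ x, HasDerivAt B (B' x) x := by
    intro x
    have h1 : HasDerivAt (fun x : ℝ => -K * x) (-K) x := by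
      simpa using (hasDerivAt_id x).const_mul (-K)
    have h2 : HasDerivAt (fun x : ℝ => Real.exp (-K * x)) (Real.exp (-K * x) * (-K)) x :=
      h1.exp
    have h3 : HasDerivAt (fun x : ℝ => L * x) L x := by
      simpa using (hasDerivAt_id x).const_mul L
    have h4 : HasDerivAt (fun x : ℝ => Real.exp (L * x)) (Real.exp (L * x) * L) x := h3.exp
    have h5 := ((h2.const_mul lam').neg).add (h4.const_mul ε)
    rw [show B' x = -(lam' * (Real.exp (-K * x) * -K)) + ε * (Real.exp (L * x) * L) by
      simp only [hB'def]
      ring]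
    exact h5
  have bound : ∀ x ∈ Ico 0 T, f x = B x → f' x < B' x := by
    intro x hx hfB
    have hEexp : 0 < ε * Real.exp (L * x) := by positivity
    have hlexp : 0 ≤ lam' * Real.exp (-K * x) := by positivity
    have hlamx : lam x = lam' * Real.exp (-K*x) - ε * Real.exp (L*x) := by
      have : -(lam x) = -(lam' * Real.exp (-K*x)) + ε * Real.exp (L*x) := hfB
      linarith
    have habs : |lam x| ≤ lam' * Real.exp (-K*x) + ε * Real.exp (L*x) := by
      rw [hlamx]
      calc |lam' * Real.exp (-K*x) - ε * Real.exp (L*x)|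
          ≤ |lam' * Real.exp (-K*x)| + |ε * Real.exp (L*x)| := abs_sub _ _
        _ = lam' * Real.exp (-K*x) + ε * Real.exp (L*x) := by
            rw [abs_of_nonneg hlexp, abs_of_nonneg hEexp.le]
    have hK0 : 0 ≤ K := by rw [hK]; linarith
    have : f' x ≤ K * (lam' * Real.exp (-K*x)) + K * (ε * Real.exp (L*x)) := by
      simp only [hf'def]
      nlinarith
    have hKL : K * (ε * Real.exp (L * x)) < ε * (L * Real.exp (L * x)) := by
      have hkl : K < L := by rw [hL]; linarith
      nlinarith
    simp only [hB'def]
    linarith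
  have hf' : ∀ x ∈ Ico 0 T, ∀ r, f' x < r → ∃ᶠ z in 𝓝[>] x, slope f x z < r := by
    intro x hx r hr
    have hxI : x ∈ Icc 0 T := Ico_subset_Icc_self hx
    set F := 𝓝[>] x with hF
    set vz : ℝ → EuclideanSpace ℝ (Fin d) := fun z => vMin (ϑ z) with hvz
    have hmaple : Filter.map vz F ≤ 𝓟 (Metric.sphere (0 : EuclideanSpace ℝ (Fin d)) 1) := by
      rw [Filter.le_principal_iff]
      exact Filter.mem_map.mpr (Filter.univ_mem'
        (fun z => mem_sphere_zero_iff_norm.mpr (vMin_norm (ϑ z))))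
    obtain ⟨w, hwS, hw⟩ :=
      (isCompact_sphere (0 : EuclideanSpace ℝ (Fin d)) 1).exists_mapClusterPt hmaple
    have hww : ‖w‖ = 1 := mem_sphere_zero_iff_norm.mp hwS
    have hFle : F ≤ 𝓝[Icc 0 T] x := by
      rw [hF, ← nhdsWithin_Ioc_eq_nhdsGT hx.2]
      exact nhdsWithin_mono x fun z hz => ⟨le_trans hx.1 hz.1.le, hz.2⟩
    have hlamT : Filter.Tendsto lam F (𝓝 (lam x)) := (hlamcont x hxI).mono_left hFle
    have hϑT : Filter.Tendsto ϑ F (𝓝 (ϑ x)) :=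
      Filter.Tendsto.mono_left (hode x hxI).continuousAt nhdsWithin_le_nhds
    have hwle : qd (ϑ x) w ≤ lam x := by
      refine le_of_forall_pos_le_add ?_
      intro θ hθ
      have ev1 : ∀ᶠ z in F, |lam z - lam x| < θ/3 := by
        have := Metric.tendsto_nhds.mp hlamT (θ/3) (by linarith)
        simpa [Real.dist_eq] using this
      have ev2 : ∀ᶠ z in F, ‖ϑ z - ϑ x‖ < θ/3 := by
        have := Metric.tendsto_nhds.mp hϑT (θ/3) (by linarith)
        simpa [dist_eq_norm] using this
      have hfreq : ∃ᶠ z in F, qd (ϑ x) w < qd (ϑ x) (vz z) + θ/3 := by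
        have hopen : IsOpen {u : EuclideanSpace ℝ (Fin d) | qd (ϑ x) w < qd (ϑ x) u + θ/3} :=
          isOpen_lt continuous_const ((q_cont (ϑ x)).add continuous_const)
        have hU : ∀ᶠ u in 𝓝 w, qd (ϑ x) w < qd (ϑ x) u + θ/3 :=
          hopen.mem_nhds (by simp only [Set.mem_setOf_eq]; linarith)
        exact (mapClusterPt_iff_frequently.mp hw) _ hU
      obtain ⟨z, h1, h2, h3⟩ := (hfreq.and_eventually (ev1.and ev2)).exists
      have e1 : qd (ϑ x) (vz z) = qd (ϑ z) (vz z) + qd (ϑ x - ϑ z) (vz z) := by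
        rw [qd_sub]; ring
      have e2 : qd (ϑ z) (vz z) = lam z := rfl
      have e3 : qd (ϑ x - ϑ z) (vz z) ≤ ‖ϑ x - ϑ z‖ := by
        have h4 := qd_abs_le (ϑ x - ϑ z) (vz z)
        rw [vMin_norm] at h4
        exact le_trans (le_abs_self _) (by simpa using h4)
      have h6 : ‖ϑ x - ϑ z‖ < θ/3 := by rw [norm_sub_rev]; exact h3
      have h7 := abs_lt.mp h2
      linarith [h7.1, h7.2]
    have hwmin : ∀ u : EuclideanSpace ℝ (Fin d), ‖u‖ = 1 → qd (ϑ x) w ≤ qd (ϑ x) u :=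
      fun u hu => le_trans hwle (lamMin_le (ϑ x) hu)
    set ddt := M x * ϑ x + ϑ x * (M x)ᵀ + D x * (D x)ᵀ with hddt
    have hlb : -(2*CM*|lamMin (ϑ x)|) ≤ qd ddt w :=
      qd_lyap_ge (hϑsymm x hxI) hww hwmin (hMbd x hxI)
    have hlb' : -(qd ddt w) ≤ f' x := by
      have : f' x = 2*CM*|lamMin (ϑ x)| := by simp only [hf'def, hK, hlamdef]
      linarith
    set ε' := (r - f' x)/2 with hε'def
    have hε'0 : 0 < ε' := by rw [hε'def]; linarith
    have hslope : Filter.Tendsto (slope ϑ x) F (𝓝 ddt) := by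
      have h8 := hasDerivAt_iff_tendsto_slope.mp (hode x hxI)
      exact h8.mono_left (nhdsWithin_mono x fun z hz =>
        Set.mem_compl_singleton_iff.mpr (ne_of_gt hz))
    have ev3 : ∀ᶠ z in F, ‖slope ϑ x z - ddt‖ < ε' := by
      have := Metric.tendsto_nhds.mp hslope ε' hε'0
      simpa [dist_eq_norm] using this
    have ev4 : ∀ᶠ z in F, x < z := eventually_mem_nhdsWithin
    have hfreq2 : ∃ᶠ z in F, -(qd ddt (vz z)) < -(qd ddt w) + ε' := by
      have hopen : IsOpen {u : EuclideanSpace ℝ (Fin d) | -(qd ddt u) < -(qd ddt w) + ε'} :=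
        isOpen_lt (q_cont ddt).neg continuous_const
      have hU : ∀ᶠ u in 𝓝 w, -(qd ddt u) < -(qd ddt w) + ε' :=
        hopen.mem_nhds (by simp only [Set.mem_setOf_eq]; linarith)
      exact (mapClusterPt_iff_frequently.mp hw) _ hU
    refine (hfreq2.and_eventually (ev3.and ev4)).mono ?_
    rintro z ⟨h1, h2, h3⟩
    have hzx : 0 < z - x := sub_pos.mpr h3
    have s1 : lam x - lam z ≤ qd (ϑ x - ϑ z) (vz z) := by
      rw [qd_sub]
      have h9 : lam x ≤ qd (ϑ x) (vz z) := lamMin_le (ϑ x) (vMin_norm (ϑ z))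
      have e2 : qd (ϑ z) (vz z) = lam z := rfl
      linarith
    have s2 : qd (ϑ x - ϑ z) (vz z) = -((z - x) * qd (slope ϑ x z) (vz z)) := by
      rw [slope_def_module, qd_msmul, qd_sub, qd_sub]
      field_simp
      ring
    have s4 : |qd (slope ϑ x z - ddt) (vz z)| ≤ ‖slope ϑ x z - ddt‖ := by
      have h10 := qd_abs_le (slope ϑ x z - ddt) (vz z)
      rw [vMin_norm] at h10
      simpa using h10
    have s5 : slope f x z = (lam x - lam z) / (z - x) := by
      rw [slope_def_field]
      simp only [hfdef]
      ring
    have s6 : slope f x z ≤ -(qd (slope ϑ x z) (vz z)) := by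
      rw [s5, div_le_iff₀ hzx]
      calc lam x - lam z ≤ qd (ϑ x - ϑ z) (vz z) := s1
        _ = -((z - x) * qd (slope ϑ x z) (vz z)) := s2
        _ = -(qd (slope ϑ x z) (vz z)) * (z - x) := by ring
    have s3 : qd (slope ϑ x z) (vz z) = qd ddt (vz z) + qd (slope ϑ x z - ddt) (vz z) := by
      rw [qd_sub]; ring
    have hrr : r = f' x + 2*ε' := by rw [hε'def]; ring
    have s7 := abs_le.mp s4
    calc slope f x z ≤ -(qd (slope ϑ x z) (vz z)) := s6
      _ < r := by rw [s3, hrr]; linarith [s7.1]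
  have hmain := image_le_of_liminf_slope_right_lt_deriv_boundary hfc hf' ha hB bound
  intro x hx
  have h := hmain hx
  simpa [hfdef, hBdef, hlamdef] using h

/-- If `ϑ` solves the Lyapunov ODE
`dϑ/dt = M(t) ϑ + ϑ M(t)ᵀ + D(t) D(t)ᵀ` with `ϑ(0) = ϑ₀ ⪰ 0` and continuous `M, D`
with `‖M‖_{L^∞} ≤ CM`, then `λ_min(ϑ(t)) ≥ λ_min(ϑ₀) exp(−2T ‖M‖_{L^∞})` for `t ∈ [0,T]`,
expressed via quadratic forms: any lower eigenvalue bound `lam₀` of `ϑ₀` yields the lower bound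
`lam₀ exp(−2T CM)` for `ϑ(t)`. -/
theorem stmt7 {d : ℕ} (T CM lam₀ : ℝ) (hT : 0 < T)
    (M D ϑ : ℝ → Matrix (Fin d) (Fin d) ℝ) (ϑ₀ : Matrix (Fin d) (Fin d) ℝ)
    (hMcont : ContinuousOn M (Set.Icc 0 T)) (hDcont : ContinuousOn D (Set.Icc 0 T))
    (hMbd : ∀ t ∈ Set.Icc (0 : ℝ) T, ‖M t‖ ≤ CM)
    (hϑsymm : ∀ t ∈ Set.Icc (0 : ℝ) T, (ϑ t).IsSymm)
    (hode : ∀ t ∈ Set.Icc (0 : ℝ) T,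
      HasDerivAt ϑ (M t * ϑ t + ϑ t * (M t)ᵀ + D t * (D t)ᵀ) t)
    (h0 : ϑ 0 = ϑ₀) (hϑ₀ : ϑ₀.PosSemidef)
    (hlam₀ : ∀ v : EuclideanSpace ℝ (Fin d), lam₀ * ‖v‖ ^ 2 ≤ ⟪v, mvE ϑ₀ v⟫) :
    ∀ t ∈ Set.Icc (0 : ℝ) T, ∀ v : EuclideanSpace ℝ (Fin d),
      lam₀ * Real.exp (-2 * T * CM) * ‖v‖ ^ 2 ≤ ⟪v, mvE (ϑ t) v⟫ := by
  rcases Nat.eq_zero_or_pos d with hd | hd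
  · subst hd
    intro t ht v
    have h1 : ⟪v, mvE (ϑ t) v⟫ = 0 := by simp [PiLp.inner_apply]
    have h2 : ‖v‖ = 0 := by simp [EuclideanSpace.norm_eq]
    rw [h1, h2]
    simp
  · haveI : Nonempty (Fin d) := ⟨⟨0, hd⟩⟩
    have hCM : 0 ≤ CM := le_trans (norm_nonneg (M 0)) (hMbd 0 ⟨le_rfl, hT.le⟩)
    set lam' := max lam₀ 0 with hlam'def
    have hlam'0 : 0 ≤ lam' := le_max_right _ _
    have hq0' : ∀ v : EuclideanSpace ℝ (Fin d), lam' * ‖v‖ ^ 2 ≤ qd ϑ₀ v := by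
      intro v
      have hpsd : 0 ≤ qd ϑ₀ v := by
        have := hϑ₀.dotProduct_mulVec_nonneg (WithLp.ofLp v)
        simpa [qd, dotProduct] using this
      rcases max_cases lam₀ 0 with ⟨h1, h2⟩ | ⟨h1, h2⟩
      · rw [hlam'def, h1, qd_eq]; exact hlam₀ v
      · rw [hlam'def, h1]; simpa using hpsd
    have hq0 : lam' ≤ lamMin (ϑ 0) := by
      rw [h0]
      have h3 := hq0' (vMin ϑ₀)
      rw [vMin_norm] at h3
      simpa [lamMin] using h3
    intro t ht v
    have hkey : ∀ ε > 0, -(lamMin (ϑ t))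
        ≤ -(lam' * Real.exp (-(2*CM)*t)) + ε * Real.exp ((2*CM+1)*t) :=
      fun ε hε => key_bound T CM hT hCM M D ϑ hMbd hϑsymm hode lam' hlam'0 hq0 ε hε t ht
    have hge : lam' * Real.exp (-(2*CM)*t) ≤ lamMin (ϑ t) := by
      by_contra hcon
      push_neg at hcon
      set δ := lam' * Real.exp (-(2*CM)*t) - lamMin (ϑ t) with hδ
      have hδ0 : 0 < δ := by rw [hδ]; linarith
      set E := Real.exp ((2*CM+1)*t) with hE
      have hE0 : 0 < E := Real.exp_pos _
      have h5 := hkey (δ / (2*E)) (by positivity)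
      have h6 : δ/(2*E) * E = δ/2 := by field_simp
      rw [h6] at h5
      have : δ ≤ δ/2 := by rw [hδ]; linarith
      linarith
    have e1 : Real.exp (-2*T*CM) ≤ Real.exp (-(2*CM)*t) := by
      apply Real.exp_le_exp.mpr
      nlinarith [ht.1, ht.2, hCM]
    have e2 : lam₀ ≤ lam' := le_max_left _ _
    have e3 : lam₀ * Real.exp (-2*T*CM) ≤ lam' * Real.exp (-(2*CM)*t) := by
      rcases le_or_gt lam₀ 0 with h | h
      · have : lam₀ * Real.exp (-2*T*CM) ≤ 0 :=
          mul_nonpos_of_nonpos_of_nonneg h (Real.exp_pos _).le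
        have h7 : 0 ≤ lam' * Real.exp (-(2*CM)*t) := by positivity
        linarith
      · calc lam₀ * Real.exp (-2*T*CM) ≤ lam₀ * Real.exp (-(2*CM)*t) :=
            mul_le_mul_of_nonneg_left e1 h.le
          _ ≤ lam' * Real.exp (-(2*CM)*t) :=
            mul_le_mul_of_nonneg_right e2 (Real.exp_pos _).le
    have hchain : lam₀ * Real.exp (-2*T*CM) * ‖v‖ ^ 2 ≤ lamMin (ϑ t) * ‖v‖ ^ 2 :=
      mul_le_mul_of_nonneg_right (le_trans e3 hge) (sq_nonneg _)
    have hfinal := le_trans hchain (lamMin_le_qd (ϑ t) v)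
    rw [qd_eq] at hfinal
    exact hfinal
end
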